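/- Any finitely supported eigenfunction F: V → ℝ of the combinatorial Laplacian Δ_comb on the Kagome lattice has eigenvalue 3/2, and F is a finite linear combination of hexagon eigenfunctions F_H. -/

import Mathlib

open Complex

/-- `w₁ = 1`. -/
noncomputable def kagomeW₁ : ℂ := 1

/-- `w₂ = e^{iπ/3}`. -/
noncomputable def kagomeW₂ : ℂ := Complex.exp (Real.pi * Complex.I / 3)

/-- The vertex set of the Kagome lattice:
`V = (2ℤw₁+2ℤw₂) ∪ (w₁+2ℤw₁+2ℤw₂) ∪ (w₂+2ℤw₁+2ℤw₂) ⊂ ℂ`. -/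
def kagomeV : Set ℂ :=
  {v | ∃ m n : ℤ,
      v = 2 * (m : ℂ) * kagomeW₁ + 2 * (n : ℂ) * kagomeW₂ ∨
      v = kagomeW₁ + 2 * (m : ℂ) * kagomeW₁ + 2 * (n : ℂ) * kagomeW₂ ∨
      v = kagomeW₂ + 2 * (m : ℂ) * kagomeW₁ + 2 * (n : ℂ) * kagomeW₂}

/-- Adjacency in the Kagome lattice: two vertices at Euclidean distance `1`. -/
def kagomeAdj (v w : ℂ) : Prop :=
  v ∈ kagomeV ∧ w ∈ kagomeV ∧ ‖v - w‖ = 1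

/-- The combinatorial (normalized) Laplacian of the Kagome lattice:
`(Δ F)(v) = (1/deg v) ∑_{w∼v} (F(v) - F(w))`, where every vertex has degree `4`.
(The sum over the finitely many neighbours is expressed as a `tsum`.) -/
noncomputable def kagomeLap (F : ℂ → ℝ) (v : ℂ) : ℝ :=
  (1 / 4) * ∑' w : {w : ℂ // kagomeAdj v w}, (F v - F (w : ℂ))

/-- `w₀` is the centre of a hexagon of the Kagome lattice: its six prospective vertices
`w₀ + e^{kπi/3}`, `k = 0,…,5`, all belong to the lattice. -/
def IsHexCenter (w₀ : ℂ) : Prop :=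
  ∀ k : Fin 6, w₀ + Complex.exp (((k : ℕ) : ℂ) * Real.pi * Complex.I / 3) ∈ kagomeV

/-- The alternating `±1` function supported on the vertices of the hexagon with centre `w₀`:
`F_H(v) = (-1)^k` if `v = w₀ + e^{kπi/3}` and `0` otherwise. -/
noncomputable def hexFun (w₀ : ℂ) : ℂ → ℝ := fun v =>
  if h : ∃ k : Fin 6, v = w₀ + Complex.exp (((k : ℕ) : ℂ) * Real.pi * Complex.I / 3) then
    (-1 : ℝ) ^ ((h.choose : ℕ)) else 0

section KagomeAux


lemma w2_eq : kagomeW₂ = (1/2 : ℝ) + (Real.sqrt 3 / 2 : ℝ) * Complex.I := by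
  have h : (Real.pi : ℂ) * Complex.I / 3 = (↑(Real.pi/3) : ℂ) * Complex.I := by
    push_cast; ring
  rw [kagomeW₂, h, Complex.exp_mul_I, ← Complex.ofReal_cos, ← Complex.ofReal_sin,
    Real.cos_pi_div_three, Real.sin_pi_div_three]

lemma w2_re : kagomeW₂.re = 1/2 := by rw [w2_eq]; simp
lemma w2_im : kagomeW₂.im = Real.sqrt 3 / 2 := by rw [w2_eq]; simp

noncomputable def pt (a b : ℤ) : ℂ := (a : ℂ) + (b : ℂ) * kagomeW₂

lemma pt_re (a b : ℤ) : (pt a b).re = a + b * (1/2) := by simp [pt, w2_re]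
lemma pt_im (a b : ℤ) : (pt a b).im = b * (Real.sqrt 3 / 2) := by simp [pt, w2_im]

lemma sqrt3_pos : (0:ℝ) < Real.sqrt 3 := Real.sqrt_pos.2 (by norm_num)

lemma pt_inj {a b a' b' : ℤ} (h : pt a b = pt a' b') : a = a' ∧ b = b' := by
  have him := congrArg Complex.im h
  have hre := congrArg Complex.re h
  rw [pt_im, pt_im] at him
  rw [pt_re, pt_re] at hre
  have hb : (b:ℝ) = b' :=
    mul_right_cancel₀ (by positivity : (Real.sqrt 3 / 2 : ℝ) ≠ 0) him
  have hb' : b = b' := by exact_mod_cast hb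
  subst hb'
  constructor
  · have : (a:ℝ) = a' := by linarith
    exact_mod_cast this
  · rfl


lemma memV_iff (v : ℂ) : v ∈ kagomeV ↔ ∃ a b : ℤ, v = pt a b ∧ ¬(Odd a ∧ Odd b) := by
  constructor
  · rintro ⟨m, n, h | h | h⟩
    · exact ⟨2*m, 2*n, by rw [h]; unfold pt kagomeW₁; push_cast; ring,
        by rw [Int.odd_iff, Int.odd_iff]; omega⟩
    · exact ⟨2*m+1, 2*n, by rw [h]; unfold pt kagomeW₁; push_cast; ring,
        by rw [Int.odd_iff, Int.odd_iff]; omega⟩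
    · exact ⟨2*m, 2*n+1, by rw [h]; unfold pt kagomeW₁; push_cast; ring,
        by rw [Int.odd_iff, Int.odd_iff]; omega⟩
  · rintro ⟨a, b, rfl, hpar⟩
    rw [Int.odd_iff, Int.odd_iff] at hpar
    rcases Int.even_or_odd a with ⟨m, hm⟩ | ⟨m, hm⟩ <;>
      rcases Int.even_or_odd b with ⟨n, hn⟩ | ⟨n, hn⟩
    · exact ⟨m, n, Or.inl (by rw [hm, hn]; unfold pt kagomeW₁; push_cast; ring)⟩
    · exact ⟨m, n, Or.inr (Or.inr (by rw [hm, hn]; unfold pt kagomeW₁; push_cast; ring))⟩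
    · exact ⟨m, n, Or.inr (Or.inl (by rw [hm, hn]; unfold pt kagomeW₁; push_cast; ring))⟩
    · exact absurd (by omega) hpar
  
lemma pt_mem_V {a b : ℤ} (h : ¬(Odd a ∧ Odd b)) : pt a b ∈ kagomeV :=
  (memV_iff _).2 ⟨a, b, rfl, h⟩

lemma normSq_pt (a b : ℤ) : Complex.normSq (pt a b) = ((a*a + a*b + b*b : ℤ) : ℝ) := by
  have h3 : Real.sqrt 3 ^ 2 = 3 := Real.sq_sqrt (by norm_num)
  rw [Complex.normSq_apply, pt_re, pt_im]
  push_cast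
  linear_combination ((b:ℝ)^2/4) * h3

lemma pt_sub (a b a' b' : ℤ) : pt a b - pt a' b' = pt (a-a') (b-b') := by
  unfold pt; push_cast; ring

lemma pt_add (a b a' b' : ℤ) : pt a b + pt a' b' = pt (a+a') (b+b') := by
  unfold pt; push_cast; ring

lemma abs_pt_eq_one {a b : ℤ} : ‖pt a b‖ = 1 ↔ a*a + a*b + b*b = 1 := by
  rw [show (1:ℝ) = Real.sqrt 1 by simp, Complex.norm_def]
  rw [Real.sqrt_inj (Complex.normSq_nonneg _) (by norm_num), normSq_pt]
  exact_mod_cast Int.cast_injective.eq_iff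

lemma unit_vec {d e : ℤ} (h : d*d + d*e + e*e = 1) :
    (d = 1 ∧ e = 0) ∨ (d = -1 ∧ e = 0) ∨ (d = 0 ∧ e = 1) ∨ (d = 0 ∧ e = -1) ∨
    (d = 1 ∧ e = -1) ∨ (d = -1 ∧ e = 1) := by
  have hd : -1 ≤ d ∧ d ≤ 1 := by
    constructor <;> nlinarith [sq_nonneg (d+2*e), sq_nonneg (2*d+e), sq_nonneg (d-1), sq_nonneg (d+1)]
  have he : -1 ≤ e ∧ e ≤ 1 := by
    constructor <;> nlinarith [sq_nonneg (d+2*e), sq_nonneg (2*d+e), sq_nonneg (e-1), sq_nonneg (e+1)]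
  obtain ⟨h1, h2⟩ := hd; obtain ⟨h3, h4⟩ := he
  interval_cases d <;> interval_cases e <;> omega


lemma adj_iff {a b : ℤ} (h : ¬(Odd a ∧ Odd b)) (w : ℂ) :
    kagomeAdj (pt a b) w ↔
      ∃ d e : ℤ, w = pt (a+d) (b+e) ∧ d*d + d*e + e*e = 1 ∧ ¬(Odd (a+d) ∧ Odd (b+e)) := by
  constructor
  · rintro ⟨-, hw, habs⟩
    obtain ⟨a', b', rfl, hpar⟩ := (memV_iff _).1 hw
    rw [pt_sub, abs_pt_eq_one] at habs
    refine ⟨a' - a, b' - b, by rw [show a + (a'-a) = a' by ring, show b + (b'-b) = b' by ring],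
      by nlinarith, by rwa [show a + (a'-a) = a' by ring, show b + (b'-b) = b' by ring]⟩
  · rintro ⟨d, e, rfl, hu, hpar⟩
    refine ⟨pt_mem_V h, pt_mem_V hpar, ?_⟩
    rw [pt_sub, abs_pt_eq_one]
    have : a - (a+d) = -d := by ring
    rw [this, show b - (b+e) = -e by ring]
    nlinarith

lemma odd_iff_mod (a : ℤ) : Odd a ↔ a % 2 = 1 := Int.odd_iff

lemma adjA {a b : ℤ} (ha : a % 2 = 0) (hb : b % 2 = 0) (w : ℂ) :
    kagomeAdj (pt a b) w ↔
      w = pt (a+1) b ∨ w = pt (a-1) b ∨ w = pt a (b+1) ∨ w = pt a (b-1) := by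
  rw [adj_iff (by rw [odd_iff_mod, odd_iff_mod]; omega)]
  constructor
  · rintro ⟨d, e, rfl, hu, hpar⟩
    rw [odd_iff_mod, odd_iff_mod] at hpar
    rcases unit_vec hu with ⟨rfl, rfl⟩|⟨rfl, rfl⟩|⟨rfl, rfl⟩|⟨rfl, rfl⟩|⟨rfl, rfl⟩|⟨rfl, rfl⟩
    · exact Or.inl (by congr 1 <;> ring)
    · exact Or.inr (Or.inl (by congr 1 <;> ring))
    · exact Or.inr (Or.inr (Or.inl (by congr 1 <;> ring)))
    · exact Or.inr (Or.inr (Or.inr (by congr 1 <;> ring)))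
    · exact absurd (by omega) hpar
    · exact absurd (by omega) hpar
  · rintro (rfl|rfl|rfl|rfl)
    · exact ⟨1, 0, by congr 1 <;> ring, by norm_num, by rw [odd_iff_mod, odd_iff_mod]; omega⟩
    · exact ⟨-1, 0, by congr 1 <;> ring, by norm_num, by rw [odd_iff_mod, odd_iff_mod]; omega⟩
    · exact ⟨0, 1, by congr 1 <;> ring, by norm_num, by rw [odd_iff_mod, odd_iff_mod]; omega⟩
    · exact ⟨0, -1, by congr 1 <;> ring, by norm_num, by rw [odd_iff_mod, odd_iff_mod]; omega⟩

lemma adjB {a b : ℤ} (ha : a % 2 = 1) (hb : b % 2 = 0) (w : ℂ) :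
    kagomeAdj (pt a b) w ↔
      w = pt (a+1) b ∨ w = pt (a-1) b ∨ w = pt (a-1) (b+1) ∨ w = pt (a+1) (b-1) := by
  rw [adj_iff (by rw [odd_iff_mod, odd_iff_mod]; omega)]
  constructor
  · rintro ⟨d, e, rfl, hu, hpar⟩
    rw [odd_iff_mod, odd_iff_mod] at hpar
    rcases unit_vec hu with ⟨rfl, rfl⟩|⟨rfl, rfl⟩|⟨rfl, rfl⟩|⟨rfl, rfl⟩|⟨rfl, rfl⟩|⟨rfl, rfl⟩
    · exact Or.inl (by congr 1 <;> ring)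
    · exact Or.inr (Or.inl (by congr 1 <;> ring))
    · exact absurd (by omega) hpar
    · exact absurd (by omega) hpar
    · exact Or.inr (Or.inr (Or.inr (by congr 1 <;> ring)))
    · exact Or.inr (Or.inr (Or.inl (by congr 1 <;> ring)))
  · rintro (rfl|rfl|rfl|rfl)
    · exact ⟨1, 0, by congr 1 <;> ring, by norm_num, by rw [odd_iff_mod, odd_iff_mod]; omega⟩
    · exact ⟨-1, 0, by congr 1 <;> ring, by norm_num, by rw [odd_iff_mod, odd_iff_mod]; omega⟩
    · exact ⟨-1, 1, by congr 1 <;> ring, by norm_num, by rw [odd_iff_mod, odd_iff_mod]; omega⟩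
    · exact ⟨1, -1, by congr 1 <;> ring, by norm_num, by rw [odd_iff_mod, odd_iff_mod]; omega⟩

lemma adjC {a b : ℤ} (ha : a % 2 = 0) (hb : b % 2 = 1) (w : ℂ) :
    kagomeAdj (pt a b) w ↔
      w = pt a (b+1) ∨ w = pt a (b-1) ∨ w = pt (a-1) (b+1) ∨ w = pt (a+1) (b-1) := by
  rw [adj_iff (by rw [odd_iff_mod, odd_iff_mod]; omega)]
  constructor
  · rintro ⟨d, e, rfl, hu, hpar⟩
    rw [odd_iff_mod, odd_iff_mod] at hpar
    rcases unit_vec hu with ⟨rfl, rfl⟩|⟨rfl, rfl⟩|⟨rfl, rfl⟩|⟨rfl, rfl⟩|⟨rfl, rfl⟩|⟨rfl, rfl⟩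
    · exact absurd (by omega) hpar
    · exact absurd (by omega) hpar
    · exact Or.inl (by congr 1 <;> ring)
    · exact Or.inr (Or.inl (by congr 1 <;> ring))
    · exact Or.inr (Or.inr (Or.inr (by congr 1 <;> ring)))
    · exact Or.inr (Or.inr (Or.inl (by congr 1 <;> ring)))
  · rintro (rfl|rfl|rfl|rfl)
    · exact ⟨0, 1, by congr 1 <;> ring, by norm_num, by rw [odd_iff_mod, odd_iff_mod]; omega⟩
    · exact ⟨0, -1, by congr 1 <;> ring, by norm_num, by rw [odd_iff_mod, odd_iff_mod]; omega⟩
    · exact ⟨-1, 1, by congr 1 <;> ring, by norm_num, by rw [odd_iff_mod, odd_iff_mod]; omega⟩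
    · exact ⟨1, -1, by congr 1 <;> ring, by norm_num, by rw [odd_iff_mod, odd_iff_mod]; omega⟩

lemma w2_sq : kagomeW₂ ^ 2 = kagomeW₂ - 1 := by
  have h3 : Real.sqrt 3 ^ 2 = 3 := Real.sq_sqrt (by norm_num)
  rw [w2_eq]
  apply Complex.ext
  · simp [pow_two, Complex.add_re, Complex.mul_re, Complex.mul_im]
    nlinarith
  · simp [pow_two, Complex.add_im, Complex.mul_re, Complex.mul_im]
    nlinarith

lemma exp_k (k : ℕ) :
    Complex.exp ((k : ℂ) * Real.pi * Complex.I / 3) = kagomeW₂ ^ k := by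
  rw [show (k : ℂ) * Real.pi * Complex.I / 3 = k * (Real.pi * Complex.I / 3) by ring,
    Complex.exp_nat_mul]
  rfl

lemma w2_pow3 : kagomeW₂ ^ 3 = -1 := by linear_combination (kagomeW₂ + 1) * w2_sq
lemma w2_pow4 : kagomeW₂ ^ 4 = -kagomeW₂ := by
  linear_combination (kagomeW₂ ^ 2 + kagomeW₂) * w2_sq
lemma w2_pow5 : kagomeW₂ ^ 5 = 1 - kagomeW₂ := by
  linear_combination kagomeW₂ * w2_pow4 - w2_sq

def hdx : Fin 6 → ℤ := ![1, 0, -1, -1, 0, 1]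
def hdy : Fin 6 → ℤ := ![0, 1, 1, 0, -1, -1]

lemma hexpt (m n : ℤ) (k : Fin 6) :
    pt (2*m+1) (2*n+1) + Complex.exp (((k : ℕ) : ℂ) * Real.pi * Complex.I / 3)
      = pt (2*m+1 + hdx k) (2*n+1 + hdy k) := by
  fin_cases k
  · show pt (2*m+1) (2*n+1) + Complex.exp (((0:ℕ) : ℂ) * Real.pi * Complex.I / 3)
      = pt (2*m+1+1) (2*n+1+0)
    rw [exp_k, pow_zero]; unfold pt; push_cast; ring
  · show pt (2*m+1) (2*n+1) + Complex.exp (((1:ℕ) : ℂ) * Real.pi * Complex.I / 3)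
      = pt (2*m+1+0) (2*n+1+1)
    rw [exp_k, pow_one]; unfold pt; push_cast; ring
  · show pt (2*m+1) (2*n+1) + Complex.exp (((2:ℕ) : ℂ) * Real.pi * Complex.I / 3)
      = pt (2*m+1+(-1)) (2*n+1+1)
    rw [exp_k, show kagomeW₂ ^ (2:ℕ) = kagomeW₂ - 1 from w2_sq]; unfold pt; push_cast; ring
  · show pt (2*m+1) (2*n+1) + Complex.exp (((3:ℕ) : ℂ) * Real.pi * Complex.I / 3)
      = pt (2*m+1+(-1)) (2*n+1+0)
    rw [exp_k, show kagomeW₂ ^ (3:ℕ) = -1 from w2_pow3]; unfold pt; push_cast; ring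
  · show pt (2*m+1) (2*n+1) + Complex.exp (((4:ℕ) : ℂ) * Real.pi * Complex.I / 3)
      = pt (2*m+1+0) (2*n+1+(-1))
    rw [exp_k, show kagomeW₂ ^ (4:ℕ) = -kagomeW₂ from w2_pow4]; unfold pt; push_cast; ring
  · show pt (2*m+1) (2*n+1) + Complex.exp (((5:ℕ) : ℂ) * Real.pi * Complex.I / 3)
      = pt (2*m+1+1) (2*n+1+(-1))
    rw [exp_k, show kagomeW₂ ^ (5:ℕ) = 1 - kagomeW₂ from w2_pow5]; unfold pt; push_cast; ring

section StageI
variable (G : ℤ → ℤ → ℝ) (lam : ℝ)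

def Su (m n : ℤ) : ℝ := G (2*m) (2*n) + G (2*m+1) (2*n) + G (2*m) (2*n+1)
def Sd (m n : ℤ) : ℝ := G (2*m) (2*n) + G (2*m-1) (2*n) + G (2*m) (2*n-1)

variable (hfin : (Function.support fun p : ℤ × ℤ => G p.1 p.2).Finite)

include hfin in
lemma SuFin : (Function.support fun p : ℤ×ℤ => Su G p.1 p.2).Finite := by
  apply Set.Finite.subset
    ((hfin.image (fun q : ℤ×ℤ => (q.1/2, q.2/2))).union
      ((hfin.image (fun q : ℤ×ℤ => ((q.1-1)/2, q.2/2))).union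
        (hfin.image (fun q : ℤ×ℤ => (q.1/2, (q.2-1)/2)))))
  intro p hp
  obtain ⟨p1, p2⟩ := p
  have hp' : Su G p1 p2 ≠ 0 := hp
  have : G (2*p1) (2*p2) ≠ 0 ∨ G (2*p1+1) (2*p2) ≠ 0 ∨ G (2*p1) (2*p2+1) ≠ 0 := by
    by_contra h; push_neg at h
    unfold Su at hp'; rw [h.1, h.2.1, h.2.2] at hp'; simp at hp'
  rcases this with h | h | h
  · exact Or.inl ⟨(2*p1, 2*p2), h, by simp only [Prod.mk.injEq]; omega⟩
  · exact Or.inr (Or.inl ⟨(2*p1+1, 2*p2), h, by simp only [Prod.mk.injEq]; omega⟩)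
  · exact Or.inr (Or.inr ⟨(2*p1, 2*p2+1), h, by simp only [Prod.mk.injEq]; omega⟩)

include hfin in
lemma SdFin : (Function.support fun p : ℤ×ℤ => Sd G p.1 p.2).Finite := by
  apply Set.Finite.subset
    ((hfin.image (fun q : ℤ×ℤ => (q.1/2, q.2/2))).union
      ((hfin.image (fun q : ℤ×ℤ => ((q.1+1)/2, q.2/2))).union
        (hfin.image (fun q : ℤ×ℤ => (q.1/2, (q.2+1)/2)))))
  intro p hp
  obtain ⟨p1, p2⟩ := p
  have hp' : Sd G p1 p2 ≠ 0 := hp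
  have : G (2*p1) (2*p2) ≠ 0 ∨ G (2*p1-1) (2*p2) ≠ 0 ∨ G (2*p1) (2*p2-1) ≠ 0 := by
    by_contra h; push_neg at h
    unfold Sd at hp'; rw [h.1, h.2.1, h.2.2] at hp'; simp at hp'
  rcases this with h | h | h
  · exact Or.inl ⟨(2*p1, 2*p2), h, by simp only [Prod.mk.injEq]; omega⟩
  · exact Or.inr (Or.inl ⟨(2*p1-1, 2*p2), h, by simp only [Prod.mk.injEq]; omega⟩)
  · exact Or.inr (Or.inr ⟨(2*p1, 2*p2-1), h, by simp only [Prod.mk.injEq]; omega⟩)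

variable
 (hA : ∀ a b, a%2=0 → b%2=0 → G (a+1) b + G (a-1) b + G a (b+1) + G a (b-1) = lam * G a b)
 (hB : ∀ a b, a%2=1 → b%2=0 → G (a+1) b + G (a-1) b + G (a-1) (b+1) + G (a+1) (b-1) = lam * G a b)
 (hC : ∀ a b, a%2=0 → b%2=1 → G a (b+1) + G a (b-1) + G (a-1) (b+1) + G (a+1) (b-1) = lam * G a b)

include hA in
lemma vA (m n : ℤ) : Su G m n + Sd G m n = (lam + 2) * G (2*m) (2*n) := by
  have h := hA (2*m) (2*n) (by omega) (by omega)
  unfold Su Sd; ring_nf; ring_nf at h; linarith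

include hB in
lemma vB (m n : ℤ) : Su G m n + Sd G (m+1) n = (lam + 2) * G (2*m+1) (2*n) := by
  have h := hB (2*m+1) (2*n) (by omega) (by omega)
  unfold Su Sd; ring_nf; ring_nf at h; linarith

include hC in
lemma vC (m n : ℤ) : Su G m n + Sd G m (n+1) = (lam + 2) * G (2*m) (2*n+1) := by
  have h := hC (2*m) (2*n+1) (by omega) (by omega)
  unfold Su Sd; ring_nf; ring_nf at h; linarith

include hA hB hC in
lemma hHU (m n : ℤ) :
    Sd G m n + Sd G (m+1) n + Sd G m (n+1) = (lam-1) * Su G m n := by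
  have h1 := vA G lam hA m n
  have h2 := vB G lam hB m n
  have h3 := vC G lam hC m n
  unfold Su Sd at *; ring_nf at *; linarith

include hA hB hC in
lemma hHD (m n : ℤ) :
    Su G m n + Su G (m-1) n + Su G m (n-1) = (lam-1) * Sd G m n := by
  have h1 := vA G lam hA m n
  have h2 := vB G lam hB (m-1) n
  have h3 := vC G lam hC m (n-1)
  unfold Su Sd at *; ring_nf at *; linarith

include hfin hA hB hC in
lemma SSzero : (∀ m n, Su G m n = 0) ∧ (∀ m n, Sd G m n = 0) := by
  have hfinU := SuFin G hfin
  have hfinD := SdFin G hfin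
  have hSd : ∀ m n, Sd G m n = 0 := by
    by_contra hcon; push_neg at hcon; obtain ⟨m₀, n₀, h₀⟩ := hcon
    obtain ⟨q, hq, hqmin⟩ := Set.exists_min_image
      (Function.support fun p : ℤ×ℤ => Sd G p.1 p.2) (fun p => p.1 + 2*p.2) hfinD
      ⟨(m₀,n₀), h₀⟩
    have hqne : Sd G q.1 q.2 ≠ 0 := hq
    have h1 : Sd G q.1 (q.2-1) = 0 := by
      by_contra h
      have := hqmin (q.1, q.2-1) h; simp only at this; omega
    have h2 : Sd G (q.1+1) (q.2-1) = 0 := by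
      by_contra h
      have := hqmin (q.1+1, q.2-1) h; simp only at this; omega
    have hu := hHU G lam hA hB hC q.1 (q.2-1)
    rw [h1, h2, show q.2 - 1 + 1 = q.2 from by ring] at hu
    have hSunz : Su G q.1 (q.2-1) ≠ 0 := by
      intro h; rw [h] at hu; simp at hu; exact hqne hu
    obtain ⟨r, hr, hrmin⟩ := Set.exists_min_image
      (Function.support fun p : ℤ×ℤ => Su G p.1 p.2) (fun p => p.1 + 2*p.2) hfinU
      ⟨(q.1, q.2-1), hSunz⟩
    have hrne : Su G r.1 r.2 ≠ 0 := hr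
    have hrle : r.1 + 2*r.2 ≤ q.1 + 2*(q.2-1) := by
      have := hrmin (q.1, q.2-1) hSunz; simpa using this
    have z1 : Su G (r.1-1) r.2 = 0 := by
      by_contra h
      have := hrmin (r.1-1, r.2) h; simp only at this; omega
    have z2 : Su G r.1 (r.2-1) = 0 := by
      by_contra h
      have := hrmin (r.1, r.2-1) h; simp only at this; omega
    have hd := hHD G lam hA hB hC r.1 r.2
    rw [z1, z2] at hd
    have hSdr : Sd G r.1 r.2 ≠ 0 := by
      intro h; rw [h] at hd; simp at hd; exact hrne hd
    have := hqmin r hSdr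
    omega
  refine ⟨?_, hSd⟩
  by_contra hcon; push_neg at hcon; obtain ⟨m₀, n₀, h₀⟩ := hcon
  obtain ⟨r, hr, hrmin⟩ := Set.exists_min_image
    (Function.support fun p : ℤ×ℤ => Su G p.1 p.2) (fun p => p.1 + 2*p.2) hfinU
    ⟨(m₀,n₀), h₀⟩
  have hrne : Su G r.1 r.2 ≠ 0 := hr
  have z1 : Su G (r.1-1) r.2 = 0 := by
    by_contra h
    have := hrmin (r.1-1, r.2) h; simp only at this; omega
  have z2 : Su G r.1 (r.2-1) = 0 := by
    by_contra h
    have := hrmin (r.1, r.2-1) h; simp only at this; omega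
  have hd := hHD G lam hA hB hC r.1 r.2
  rw [z1, z2, hSd r.1 r.2] at hd
  simp at hd
  exact hrne hd

end StageI

noncomputable def hex0 (x y : ℤ) : ℝ :=
  (if x = 2 ∧ y = 1 then 1 else 0) + (if x = 1 ∧ y = 2 then -1 else 0)
  + (if x = 0 ∧ y = 2 then 1 else 0) + (if x = 0 ∧ y = 1 then -1 else 0)
  + (if x = 1 ∧ y = 0 then 1 else 0) + (if x = 2 ∧ y = 0 then -1 else 0)

noncomputable def Hex (m n a b : ℤ) : ℝ := hex0 (a - 2*m) (b - 2*n)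

lemma hex0_vanish (x y : ℤ) (h : x < 0 ∨ 2 < x ∨ y < 0 ∨ 2 < y) : hex0 x y = 0 := by
  unfold hex0
  rw [if_neg (by omega), if_neg (by omega), if_neg (by omega), if_neg (by omega),
    if_neg (by omega), if_neg (by omega)]
  norm_num

lemma hex0_up (x y : ℤ) : hex0 (2*x) (2*y) + hex0 (2*x+1) (2*y) + hex0 (2*x) (2*y+1) = 0 := by
  rcases (by omega : x < 0 ∨ x = 0 ∨ x = 1 ∨ 1 < x) with hx|rfl|rfl|hx <;>
  rcases (by omega : y < 0 ∨ y = 0 ∨ y = 1 ∨ 1 < y) with hy|rfl|rfl|hy <;>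
  first
    | (rw [hex0_vanish _ _ (by omega), hex0_vanish _ _ (by omega),
        hex0_vanish _ _ (by omega)]; norm_num)
    | norm_num [hex0]

lemma hex0_dn (x y : ℤ) : hex0 (2*x) (2*y) + hex0 (2*x-1) (2*y) + hex0 (2*x) (2*y-1) = 0 := by
  rcases (by omega : x < 0 ∨ x = 0 ∨ x = 1 ∨ 1 < x) with hx|rfl|rfl|hx <;>
  rcases (by omega : y < 0 ∨ y = 0 ∨ y = 1 ∨ 1 < y) with hy|rfl|rfl|hy <;>
  first
    | (rw [hex0_vanish _ _ (by omega), hex0_vanish _ _ (by omega),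
        hex0_vanish _ _ (by omega)]; norm_num)
    | norm_num [hex0]

lemma hexUp (m n p q : ℤ) :
    Hex m n (2*p) (2*q) + Hex m n (2*p+1) (2*q) + Hex m n (2*p) (2*q+1) = 0 := by
  have h := hex0_up (p-m) (q-n)
  unfold Hex
  rw [show 2*p - 2*m = 2*(p-m) by ring, show 2*q - 2*n = 2*(q-n) by ring,
    show 2*p+1 - 2*m = 2*(p-m)+1 by ring, show 2*q+1 - 2*n = 2*(q-n)+1 by ring]
  exact h

lemma hexDn (m n p q : ℤ) :
    Hex m n (2*p) (2*q) + Hex m n (2*p-1) (2*q) + Hex m n (2*p) (2*q-1) = 0 := by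
  have h := hex0_dn (p-m) (q-n)
  unfold Hex
  rw [show 2*p - 2*m = 2*(p-m) by ring, show 2*q - 2*n = 2*(q-n) by ring,
    show 2*p-1 - 2*m = 2*(p-m)-1 by ring, show 2*q-1 - 2*n = 2*(q-n)-1 by ring]
  exact h

lemma hex_zero {m n a b : ℤ} (h : a < 2*m ∨ 2*m+2 < a ∨ b < 2*n ∨ 2*n+2 < b) :
    Hex m n a b = 0 := hex0_vanish _ _ (by omega)

lemma hex_odd {m n a b : ℤ} (ha : a % 2 = 1) (hb : b % 2 = 1) : Hex m n a b = 0 := by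
  unfold Hex hex0
  rw [if_neg (by omega), if_neg (by omega), if_neg (by omega), if_neg (by omega),
    if_neg (by omega), if_neg (by omega)]
  norm_num

lemma hex_row_top1 (m n p : ℤ) : Hex m (n-1) (2*p) (2*n) = if p = m then 1 else 0 := by
  rcases eq_or_ne p m with rfl | h
  · rw [if_pos rfl]
    unfold Hex hex0
    rw [if_neg (by omega), if_neg (by omega), if_pos (by omega), if_neg (by omega),
      if_neg (by omega), if_neg (by omega)]
    norm_num
  · rw [if_neg h]
    rcases eq_or_ne p (m+1) with rfl | h2
    · unfold Hex hex0
      rw [if_neg (by omega), if_neg (by omega), if_neg (by omega), if_neg (by omega),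
        if_neg (by omega), if_neg (by omega)]
      norm_num
    · exact hex_zero (by omega)

lemma hex_row_top2 (m n p : ℤ) : Hex m (n-1) (2*p+1) (2*n) = if p = m then -1 else 0 := by
  rcases eq_or_ne p m with rfl | h
  · rw [if_pos rfl]
    unfold Hex hex0
    rw [if_neg (by omega), if_pos (by omega), if_neg (by omega), if_neg (by omega),
      if_neg (by omega), if_neg (by omega)]
    norm_num
  · rw [if_neg h]
    exact hex_zero (by omega)

lemma hexFin (m n : ℤ) : (Function.support fun p : ℤ×ℤ => Hex m n p.1 p.2).Finite := by
  apply Set.Finite.subset (Set.finite_Icc ((2*m, 2*n) : ℤ×ℤ) (2*m+2, 2*n+2))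
  intro p hp
  have hp' : Hex m n p.1 p.2 ≠ 0 := hp
  by_contra hmem
  rw [Set.mem_Icc] at hmem
  exact hp' (hex_zero (by
    rw [Prod.le_def, Prod.le_def] at hmem
    push_neg at hmem
    omega))

lemma row_odd_top (G : ℤ → ℤ → ℝ)
    (hdn : ∀ m n', G (2*m) (2*n') + G (2*m-1) (2*n') + G (2*m) (2*n'-1) = 0)
    (hodd : ∀ a b, a % 2 = 1 → b % 2 = 1 → G a b = 0)
    (r : ℤ) (hr : r % 2 = 1) (h : ∀ a b, r < b → G a b = 0) : ∀ a, G a r = 0 := by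
  intro a
  rcases (by omega : a % 2 = 1 ∨ a % 2 = 0) with ha | ha
  · exact hodd a r ha hr
  · obtain ⟨m, rfl⟩ : ∃ m, a = 2*m := ⟨a/2, by omega⟩
    obtain ⟨n', rfl⟩ : ∃ n', r = 2*n'-1 := ⟨(r+1)/2, by omega⟩
    have hd := hdn m n'
    rw [h (2*m) (2*n') (by omega), h (2*m-1) (2*n') (by omega)] at hd
    linarith

lemma single_row (G : ℤ → ℤ → ℝ)
    (hup : ∀ m n', G (2*m) (2*n') + G (2*m+1) (2*n') + G (2*m) (2*n'+1) = 0)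
    (hdn : ∀ m n', G (2*m) (2*n') + G (2*m-1) (2*n') + G (2*m) (2*n'-1) = 0)
    (hfin : (Function.support fun p : ℤ×ℤ => G p.1 p.2).Finite)
    (n : ℤ) (htop : ∀ a b, 2*n < b → G a b = 0) (hbot : ∀ a b, b < 2*n → G a b = 0) :
    ∀ a b, G a b = 0 := by
  have step : ∀ a, G (a+1) (2*n) = -G a (2*n) := by
    intro a
    rcases (by omega : a % 2 = 0 ∨ a % 2 = 1) with ha | ha
    · obtain ⟨m, rfl⟩ : ∃ m, a = 2*m := ⟨a/2, by omega⟩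
      have h := hup m n
      rw [htop (2*m) (2*n+1) (by omega)] at h
      linarith
    · obtain ⟨m, hm⟩ : ∃ m, a = 2*m-1 := ⟨(a+1)/2, by omega⟩
      have h := hdn m n
      rw [hbot (2*m) (2*n-1) (by omega)] at h
      rw [hm, show 2*m-1+1 = 2*m by ring]
      linarith
  have main : ∀ a, G a (2*n) = 0 := by
    intro a
    by_contra hne
    have prop : ∀ j : ℕ, G (a + j) (2*n) ≠ 0 := by
      intro j
      induction j with
      | zero => simpa using hne
      | succ j ih =>
        have := step (a + j)
        push_cast
        rw [show a + ((j:ℤ)+1) = a + (j:ℤ) + 1 by ring, this]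
        simpa using ih
    have hinf : (Function.support fun p : ℤ×ℤ => G p.1 p.2).Infinite := by
      apply Set.infinite_of_injective_forall_mem
        (f := fun j : ℕ => ((a + (j:ℤ), 2*n) : ℤ×ℤ))
      case hi =>
        intro i j hij
        simp only [Prod.mk.injEq] at hij
        omega
      case hf =>
        intro j
        exact prop j
    exact hinf hfin
  intro a b
  rcases lt_trichotomy b (2*n) with h | rfl | h
  · exact hbot a b h
  · exact main a
  · exact htop a b h

lemma decompose (k : ℕ) : ∀ (G : ℤ → ℤ → ℝ) (n : ℤ),
    (∀ m n', G (2*m) (2*n') + G (2*m+1) (2*n') + G (2*m) (2*n'+1) = 0) →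
    (∀ m n', G (2*m) (2*n') + G (2*m-1) (2*n') + G (2*m) (2*n'-1) = 0) →
    (∀ a b, a % 2 = 1 → b % 2 = 1 → G a b = 0) →
    (Function.support fun p : ℤ×ℤ => G p.1 p.2).Finite →
    (∀ a b, 2*n < b → G a b = 0) →
    (∀ a b, b < 2*n - 2*(k:ℤ) → G a b = 0) →
    ∃ (t : Finset (ℤ×ℤ)) (c : ℤ×ℤ → ℝ),
      ∀ a b : ℤ, G a b = ∑ p ∈ t, c p * Hex p.1 p.2 a b := by
  induction k with
  | zero =>
    intro G n hup hdn hodd hfin htop hbot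
    refine ⟨∅, 0, fun a b => ?_⟩
    rw [single_row G hup hdn hfin n htop (fun a b hb => hbot a b (by push_cast; omega))]
    simp
  | succ k IH =>
    intro G n hup hdn hodd hfin htop hbot
    classical
    set M : Finset ℤ := hfin.toFinset.image (fun p => p.1 / 2) with hM
    have hMtop : ∀ p : ℤ, G (2*p) (2*n) ≠ 0 → p ∈ M := by
      intro p hp
      rw [hM]
      apply Finset.mem_image.2
      exact ⟨(2*p, 2*n), by rw [Set.Finite.mem_toFinset]; exact hp, by omega⟩
    set G' : ℤ → ℤ → ℝ :=
      fun a b => G a b - ∑ m' ∈ M, G (2*m') (2*n) * Hex m' (n-1) a b with hG'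
    have hup' : ∀ m n', G' (2*m) (2*n') + G' (2*m+1) (2*n') + G' (2*m) (2*n'+1) = 0 := by
      intro m n'
      have hg := hup m n'
      have hs : (∑ m' ∈ M, G (2*m') (2*n) * Hex m' (n-1) (2*m) (2*n'))
          + (∑ m' ∈ M, G (2*m') (2*n) * Hex m' (n-1) (2*m+1) (2*n'))
          + (∑ m' ∈ M, G (2*m') (2*n) * Hex m' (n-1) (2*m) (2*n'+1)) = 0 := by
        rw [← Finset.sum_add_distrib, ← Finset.sum_add_distrib]
        apply Finset.sum_eq_zero
        intro p hp
        linear_combination (G (2*p) (2*n)) * hexUp p (n-1) m n'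
      simp only [hG']
      linarith
    have hdn' : ∀ m n', G' (2*m) (2*n') + G' (2*m-1) (2*n') + G' (2*m) (2*n'-1) = 0 := by
      intro m n'
      have hg := hdn m n'
      have hs : (∑ m' ∈ M, G (2*m') (2*n) * Hex m' (n-1) (2*m) (2*n'))
          + (∑ m' ∈ M, G (2*m') (2*n) * Hex m' (n-1) (2*m-1) (2*n'))
          + (∑ m' ∈ M, G (2*m') (2*n) * Hex m' (n-1) (2*m) (2*n'-1)) = 0 := by
        rw [← Finset.sum_add_distrib, ← Finset.sum_add_distrib]
        apply Finset.sum_eq_zero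
        intro p hp
        linear_combination (G (2*p) (2*n)) * hexDn p (n-1) m n'
      simp only [hG']
      linarith
    have hodd' : ∀ a b, a % 2 = 1 → b % 2 = 1 → G' a b = 0 := by
      intro a b ha hb
      simp only [hG']
      rw [hodd a b ha hb, Finset.sum_eq_zero (fun p hp => by rw [hex_odd ha hb, mul_zero])]
      simp
    have hfin' : (Function.support fun p : ℤ×ℤ => G' p.1 p.2).Finite := by
      apply Set.Finite.subset
        (hfin.union (Set.Finite.biUnion M.finite_toSet
          (fun m' _ => hexFin m' (n-1))))
      intro p hp
      have hp' : G' p.1 p.2 ≠ 0 := hp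
      by_contra hmem
      rw [Set.mem_union] at hmem
      push_neg at hmem
      obtain ⟨h1, h2⟩ := hmem
      have hG0 : G p.1 p.2 = 0 := by
        by_contra h; exact h1 h
      have : ∀ m' ∈ M, Hex m' (n-1) p.1 p.2 = 0 := by
        intro m' hm'
        by_contra h
        exact h2 (Set.mem_biUnion hm' h)
      apply hp'
      simp only [hG', hG0]
      rw [Finset.sum_eq_zero (fun q hq => by rw [this q hq, mul_zero])]
      simp
    have hzgt : ∀ a b, 2*n < b → G' a b = 0 := by
      intro a b hb
      simp only [hG']
      rw [htop a b hb, Finset.sum_eq_zero (fun q hq => by rw [hex_zero (by omega), mul_zero])]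
      simp
    have hz2n : ∀ a, G' a (2*n) = 0 := by
      intro a
      rcases (by omega : a % 2 = 0 ∨ a % 2 = 1) with ha | ha
      · obtain ⟨p, rfl⟩ : ∃ p, a = 2*p := ⟨a/2, by omega⟩
        simp only [hG']
        have : ∀ m' ∈ M, G (2*m') (2*n) * Hex m' (n-1) (2*p) (2*n)
            = if p = m' then G (2*m') (2*n) else 0 := by
          intro m' _
          rw [hex_row_top1]
          split_ifs <;> simp
        rw [Finset.sum_congr rfl this, Finset.sum_ite_eq M p (fun m' => G (2*m') (2*n))]
        by_cases hp : p ∈ M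
        · rw [if_pos hp]; ring
        · rw [if_neg hp]
          have : G (2*p) (2*n) = 0 := by
            by_contra h; exact hp (hMtop p h)
          rw [this]; ring
      · obtain ⟨p, rfl⟩ : ∃ p, a = 2*p+1 := ⟨(a-1)/2, by omega⟩
        simp only [hG']
        have hpair : G (2*p+1) (2*n) = -G (2*p) (2*n) := by
          have h := hup p n
          rw [htop (2*p) (2*n+1) (by omega)] at h
          linarith
        have : ∀ m' ∈ M, G (2*m') (2*n) * Hex m' (n-1) (2*p+1) (2*n)
            = if p = m' then -G (2*m') (2*n) else 0 := by
          intro m' _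
          rw [hex_row_top2]
          split_ifs <;> simp
        rw [Finset.sum_congr rfl this, Finset.sum_ite_eq M p (fun m' => -G (2*m') (2*n))]
        by_cases hp : p ∈ M
        · rw [if_pos hp, hpair]; ring
        · rw [if_neg hp]
          have h0 : G (2*p) (2*n) = 0 := by
            by_contra h; exact hp (hMtop p h)
          rw [hpair, h0]; ring
    have hz2n1 : ∀ a, G' a (2*n-1) = 0 := by
      apply row_odd_top G' hdn' hodd' (2*n-1) (by omega)
      intro a b hb
      rcases (by omega : b = 2*n ∨ 2*n < b) with rfl | h
      · exact hz2n a
      · exact hzgt a b h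
    have htop' : ∀ a b, 2*(n-1) < b → G' a b = 0 := by
      intro a b hb
      rcases (by omega : b = 2*n-1 ∨ b = 2*n ∨ 2*n < b) with rfl | rfl | h
      · exact hz2n1 a
      · exact hz2n a
      · exact hzgt a b h
    have hbot' : ∀ a b, b < 2*(n-1) - 2*(k:ℤ) → G' a b = 0 := by
      intro a b hb
      simp only [hG']
      rw [hbot a b (by push_cast; omega),
        Finset.sum_eq_zero (fun q hq => by rw [hex_zero (by omega), mul_zero])]
      simp
    obtain ⟨t, c, hc⟩ := IH G' (n-1) hup' hdn' hodd' hfin' htop' hbot'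
    set M' : Finset (ℤ×ℤ) := M.image (fun m' => (m', n-1)) with hM'
    refine ⟨t ∪ M', fun p => (if p ∈ t then c p else 0)
      + (if p ∈ M' then (if p.2 = n-1 then G (2*p.1) (2*n) else 0) else 0), fun a b => ?_⟩
    have expand : ∑ p ∈ t ∪ M', ((if p ∈ t then c p else 0)
        + (if p ∈ M' then (if p.2 = n-1 then G (2*p.1) (2*n) else 0) else 0)) * Hex p.1 p.2 a b
        = (∑ p ∈ t ∪ M', (if p ∈ t then c p * Hex p.1 p.2 a b else 0))
          + ∑ p ∈ t ∪ M', (if p ∈ M'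
              then (if p.2 = n-1 then G (2*p.1) (2*n) else 0) * Hex p.1 p.2 a b else 0) := by
      rw [← Finset.sum_add_distrib]
      apply Finset.sum_congr rfl
      intro p hp
      split_ifs <;> ring
    rw [expand, Finset.sum_ite_mem, Finset.sum_ite_mem,
      Finset.union_inter_cancel_left, Finset.union_inter_cancel_right]
    have himg : ∑ p ∈ M', (if p.2 = n-1 then G (2*p.1) (2*n) else 0) * Hex p.1 p.2 a b
        = ∑ m' ∈ M, G (2*m') (2*n) * Hex m' (n-1) a b := by
      rw [hM', Finset.sum_image (by intro x _ y _ hxy; simpa using hxy)]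
      apply Finset.sum_congr rfl
      intro m' _
      simp
    rw [himg, ← hc a b]
    simp only [hG']
    ring
  

lemma pt_mem_iff {a b : ℤ} : pt a b ∈ kagomeV ↔ ¬(Odd a ∧ Odd b) := by
  constructor
  · intro h
    obtain ⟨a', b', he, hp⟩ := (memV_iff _).1 h
    obtain ⟨rfl, rfl⟩ := pt_inj he
    exact hp
  · exact pt_mem_V


lemma hd_parity : ∀ k : Fin 6, hdx k % 2 = 1 ∨ hdy k % 2 = 1 := by decide

lemma center_isHexCenter (m n : ℤ) : IsHexCenter (pt (2*m+1) (2*n+1)) := by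
  intro k
  rw [hexpt]
  apply pt_mem_V
  rw [Int.odd_iff, Int.odd_iff]
  rcases hd_parity k with h | h <;> omega


lemma hexFun_not_mem {w₀ : ℂ} (hw : IsHexCenter w₀) {v : ℂ} (hv : v ∉ kagomeV) :
    hexFun w₀ v = 0 := by
  unfold hexFun
  rw [dif_neg]
  rintro ⟨k, rfl⟩
  exact hv (hw k)

lemma hex_ne {m n a b : ℤ} (h : Hex m n a b ≠ 0) :
    (a = 2*m+2 ∧ b = 2*n+1) ∨ (a = 2*m+1 ∧ b = 2*n+2) ∨ (a = 2*m ∧ b = 2*n+2) ∨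
    (a = 2*m ∧ b = 2*n+1) ∨ (a = 2*m+1 ∧ b = 2*n) ∨ (a = 2*m+2 ∧ b = 2*n) := by
  by_contra hc
  apply h
  unfold Hex hex0
  rw [if_neg (by omega), if_neg (by omega), if_neg (by omega), if_neg (by omega),
    if_neg (by omega), if_neg (by omega)]
  norm_num

lemma hexv1 (m n : ℤ) : Hex m n (2*m+2) (2*n+1) = 1 := by
  unfold Hex hex0
  rw [if_pos (by omega), if_neg (by omega), if_neg (by omega), if_neg (by omega),
    if_neg (by omega), if_neg (by omega)]
  norm_num

lemma hexv2 (m n : ℤ) : Hex m n (2*m+1) (2*n+2) = -1 := by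
  unfold Hex hex0
  rw [if_neg (by omega), if_pos (by omega), if_neg (by omega), if_neg (by omega),
    if_neg (by omega), if_neg (by omega)]
  norm_num

lemma hexv3 (m n : ℤ) : Hex m n (2*m) (2*n+2) = 1 := by
  unfold Hex hex0
  rw [if_neg (by omega), if_neg (by omega), if_pos (by omega), if_neg (by omega),
    if_neg (by omega), if_neg (by omega)]
  norm_num

lemma hexv4 (m n : ℤ) : Hex m n (2*m) (2*n+1) = -1 := by
  unfold Hex hex0
  rw [if_neg (by omega), if_neg (by omega), if_neg (by omega), if_pos (by omega),
    if_neg (by omega), if_neg (by omega)]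
  norm_num

lemma hexv5 (m n : ℤ) : Hex m n (2*m+1) (2*n) = 1 := by
  unfold Hex hex0
  rw [if_neg (by omega), if_neg (by omega), if_neg (by omega), if_neg (by omega),
    if_pos (by omega), if_neg (by omega)]
  norm_num

lemma hexv6 (m n : ℤ) : Hex m n (2*m+2) (2*n) = -1 := by
  unfold Hex hex0
  rw [if_neg (by omega), if_neg (by omega), if_neg (by omega), if_neg (by omega),
    if_neg (by omega), if_pos (by omega)]
  norm_num

lemma hexFun_pt (m n a b : ℤ) : hexFun (pt (2*m+1) (2*n+1)) (pt a b) = Hex m n a b := by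
  unfold hexFun
  by_cases h : ∃ k : Fin 6,
      pt a b = pt (2*m+1) (2*n+1) + Complex.exp (((k : ℕ) : ℂ) * Real.pi * Complex.I / 3)
  · rw [dif_pos h]
    have hkeq := h.choose_spec
    set k := h.choose with hk
    clear_value k
    rw [hexpt] at hkeq
    obtain ⟨ha, hb⟩ := pt_inj hkeq
    subst ha hb
    fin_cases k
    · show ((-1:ℝ))^(0:ℕ) = Hex m n (2*m+1+1) (2*n+1+0)
      rw [show 2*m+1+1 = 2*m+2 by ring, show 2*n+1+0 = 2*n+1 by ring, hexv1]; norm_num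
    · show ((-1:ℝ))^(1:ℕ) = Hex m n (2*m+1+0) (2*n+1+1)
      rw [show 2*m+1+0 = 2*m+1 by ring, show 2*n+1+1 = 2*n+2 by ring, hexv2]; norm_num
    · show ((-1:ℝ))^(2:ℕ) = Hex m n (2*m+1+(-1)) (2*n+1+1)
      rw [show 2*m+1+(-1) = 2*m by ring, show 2*n+1+1 = 2*n+2 by ring, hexv3]; norm_num
    · show ((-1:ℝ))^(3:ℕ) = Hex m n (2*m+1+(-1)) (2*n+1+0)
      rw [show 2*m+1+(-1) = 2*m by ring, show 2*n+1+0 = 2*n+1 by ring, hexv4]; norm_num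
    · show ((-1:ℝ))^(4:ℕ) = Hex m n (2*m+1+0) (2*n+1+(-1))
      rw [show 2*m+1+0 = 2*m+1 by ring, show 2*n+1+(-1) = 2*n by ring, hexv5]; norm_num
    · show ((-1:ℝ))^(5:ℕ) = Hex m n (2*m+1+1) (2*n+1+(-1))
      rw [show 2*m+1+1 = 2*m+2 by ring, show 2*n+1+(-1) = 2*n by ring, hexv6]; norm_num
  · rw [dif_neg h]
    by_contra hne
    have hne' : Hex m n a b ≠ 0 := fun h0 => hne h0.symm
    rcases hex_ne hne' with ⟨rfl, rfl⟩|⟨rfl, rfl⟩|⟨rfl, rfl⟩|⟨rfl, rfl⟩|⟨rfl, rfl⟩|⟨rfl, rfl⟩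
    · exact h ⟨0, by
        rw [hexpt]; show pt (2*m+2) (2*n+1) = pt (2*m+1+1) (2*n+1+0); congr 1 <;> ring⟩
    · exact h ⟨1, by
        rw [hexpt]; show pt (2*m+1) (2*n+2) = pt (2*m+1+0) (2*n+1+1); congr 1 <;> ring⟩
    · exact h ⟨2, by
        rw [hexpt]; show pt (2*m) (2*n+2) = pt (2*m+1+(-1)) (2*n+1+1); congr 1 <;> ring⟩
    · exact h ⟨3, by
        rw [hexpt]; show pt (2*m) (2*n+1) = pt (2*m+1+(-1)) (2*n+1+0); congr 1 <;> ring⟩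
    · exact h ⟨4, by
        rw [hexpt]; show pt (2*m+1) (2*n) = pt (2*m+1+0) (2*n+1+(-1)); congr 1 <;> ring⟩
    · exact h ⟨5, by
        rw [hexpt]; show pt (2*m+2) (2*n) = pt (2*m+1+1) (2*n+1+(-1)); congr 1 <;> ring⟩

lemma tsum_four (F : ℂ → ℝ) (v : ℂ) {P : ℂ → Prop} (p1 p2 p3 p4 : ℂ)
    (hP : ∀ w, P w ↔ w = p1 ∨ w = p2 ∨ w = p3 ∨ w = p4)
    (h12 : p1 ≠ p2) (h13 : p1 ≠ p3) (h14 : p1 ≠ p4)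
    (h23 : p2 ≠ p3) (h24 : p2 ≠ p4) (h34 : p3 ≠ p4) :
    ∑' w : {w : ℂ // P w}, (F v - F ↑w)
      = (F v - F p1) + (F v - F p2) + (F v - F p3) + (F v - F p4) := by
  have hs : {w | P w} = (↑({p1,p2,p3,p4} : Finset ℂ) : Set ℂ) := by
    ext w; simp [hP w]
  calc ∑' w : {w : ℂ // P w}, (F v - F ↑w)
      = ∑' w : (↑({p1,p2,p3,p4} : Finset ℂ) : Set ℂ), (F v - F ↑w) :=
        tsum_congr_set_coe (fun w => F v - F w) hs
    _ = ∑ w ∈ ({p1,p2,p3,p4} : Finset ℂ), (F v - F w) :=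
        Finset.tsum_subtype _ (fun w => F v - F w)
    _ = (F v - F p1) + (F v - F p2) + (F v - F p3) + (F v - F p4) := by
        rw [Finset.sum_insert (by simp [h12, h13, h14]),
          Finset.sum_insert (by simp [h23, h24]),
          Finset.sum_insert (by simp [h34]), Finset.sum_singleton]
        ring

lemma pt_ne {a b a' b' : ℤ} (h : ¬(a = a' ∧ b = b')) : pt a b ≠ pt a' b' := by
  intro he
  obtain ⟨h1, h2⟩ := pt_inj he
  exact h ⟨h1, h2⟩

theorem Gmain (G : ℤ → ℤ → ℝ) (lam : ℝ)
    (hfin : (Function.support fun p : ℤ×ℤ => G p.1 p.2).Finite)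
    (hodd : ∀ a b, a % 2 = 1 → b % 2 = 1 → G a b = 0)
    (hA : ∀ a b, a%2=0 → b%2=0 → G (a+1) b + G (a-1) b + G a (b+1) + G a (b-1) = lam * G a b)
    (hB : ∀ a b, a%2=1 → b%2=0 → G (a+1) b + G (a-1) b + G (a-1) (b+1) + G (a+1) (b-1)
      = lam * G a b)
    (hC : ∀ a b, a%2=0 → b%2=1 → G a (b+1) + G a (b-1) + G (a-1) (b+1) + G (a+1) (b-1)
      = lam * G a b)
    (hne : ∃ a b, G a b ≠ 0) :
    lam = -2 ∧ ∃ (t : Finset (ℤ×ℤ)) (c : ℤ×ℤ → ℝ),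
      ∀ a b : ℤ, G a b = ∑ p ∈ t, c p * Hex p.1 p.2 a b := by
  obtain ⟨hSu, hSd⟩ := SSzero G lam hfin hA hB hC
  have hflat : ∀ a b, (lam + 2) * G a b = 0 := by
    intro a b
    rcases (by omega : (a%2=0 ∧ b%2=0) ∨ (a%2=1 ∧ b%2=0) ∨ (a%2=0 ∧ b%2=1) ∨ (a%2=1 ∧ b%2=1))
      with ⟨ha, hb⟩ | ⟨ha, hb⟩ | ⟨ha, hb⟩ | ⟨ha, hb⟩
    · obtain ⟨m, rfl⟩ : ∃ m, a = 2*m := ⟨a/2, by omega⟩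
      obtain ⟨n', rfl⟩ : ∃ n', b = 2*n' := ⟨b/2, by omega⟩
      have h := vA G lam hA m n'
      rw [hSu m n', hSd m n'] at h
      linarith
    · obtain ⟨m, rfl⟩ : ∃ m, a = 2*m+1 := ⟨(a-1)/2, by omega⟩
      obtain ⟨n', rfl⟩ : ∃ n', b = 2*n' := ⟨b/2, by omega⟩
      have h := vB G lam hB m n'
      rw [hSu m n', hSd (m+1) n'] at h
      linarith
    · obtain ⟨m, rfl⟩ : ∃ m, a = 2*m := ⟨a/2, by omega⟩
      obtain ⟨n', rfl⟩ : ∃ n', b = 2*n'+1 := ⟨(b-1)/2, by omega⟩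
      have h := vC G lam hC m n'
      rw [hSu m n', hSd m (n'+1)] at h
      linarith
    · rw [hodd a b ha hb]; ring
  obtain ⟨a₀, b₀, hab⟩ := hne
  have hlam : lam = -2 := by
    have h := hflat a₀ b₀
    rcases mul_eq_zero.1 h with h' | h'
    · linarith
    · exact absurd h' hab
  refine ⟨hlam, ?_⟩
  have hup : ∀ m n', G (2*m) (2*n') + G (2*m+1) (2*n') + G (2*m) (2*n'+1) = 0 :=
    fun m n' => hSu m n'
  have hdn : ∀ m n', G (2*m) (2*n') + G (2*m-1) (2*n') + G (2*m) (2*n'-1) = 0 :=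
    fun m n' => hSd m n'
  -- bounds on the support
  have hsne : (hfin.toFinset).Nonempty := ⟨(a₀, b₀), hfin.mem_toFinset.2 hab⟩
  have hbs : ((hfin.toFinset).image Prod.snd).Nonempty := hsne.image _
  set bmax := ((hfin.toFinset).image Prod.snd).max' hbs with hbmax
  set bmin := ((hfin.toFinset).image Prod.snd).min' hbs with hbmin
  have hminmax : bmin ≤ bmax := Finset.min'_le _ _ (Finset.max'_mem _ _)
  have hrow : ∀ a b : ℤ, G a b ≠ 0 → bmin ≤ b ∧ b ≤ bmax := by
    intro a b h
    have hmem : b ∈ (hfin.toFinset).image Prod.snd :=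
      Finset.mem_image.2 ⟨(a, b), hfin.mem_toFinset.2 h, rfl⟩
    exact ⟨Finset.min'_le _ _ hmem, Finset.le_max' _ _ hmem⟩
  set n : ℤ := (bmax.natAbs : ℤ) + 1 with hn
  set k : ℕ := (2*n - bmin).toNat with hk
  have hb2n : bmax < 2*n := by omega
  have htop : ∀ a b, 2*n < b → G a b = 0 := by
    intro a b hb
    by_contra h
    have := hrow a b h
    omega
  have hbot : ∀ a b, b < 2*n - 2*(k:ℤ) → G a b = 0 := by
    intro a b hb
    by_contra h
    have h1 := hrow a b h
    have h2 : (k : ℤ) = 2*n - bmin := by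
      rw [hk]; rw [Int.toNat_of_nonneg (by omega)]
    omega
  exact decompose k G n hup hdn hodd hfin htop hbot



end KagomeAux

/-- Any finitely supported eigenfunction of the combinatorial Laplacian on the
Kagome lattice has eigenvalue `3/2` and is a finite linear combination of hexagon
eigenfunctions `F_H`. -/
theorem finitely_supported_eigenfunction_classification
    (F : ℂ → ℝ) (hzero : ∀ v ∉ kagomeV, F v = 0)
    (hfin : (Function.support F).Finite) (hne : F ≠ 0)
    (μ : ℝ) (heig : ∀ v ∈ kagomeV, kagomeLap F v = μ * F v) :
    μ = 3 / 2 ∧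
    ∃ (s : Finset ℂ) (c : ℂ → ℝ), (∀ w₀ ∈ s, IsHexCenter w₀) ∧
      ∀ v : ℂ, F v = ∑ w₀ ∈ s, c w₀ * hexFun w₀ v := by
  classical
  have key : ∀ (v p1 p2 p3 p4 : ℂ), v ∈ kagomeV →
      (∀ w, kagomeAdj v w ↔ w = p1 ∨ w = p2 ∨ w = p3 ∨ w = p4) →
      p1 ≠ p2 → p1 ≠ p3 → p1 ≠ p4 → p2 ≠ p3 → p2 ≠ p4 → p3 ≠ p4 →
      F p1 + F p2 + F p3 + F p4 = (4 - 4*μ) * F v := by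
    intro v p1 p2 p3 p4 hv hP h12 h13 h14 h23 h24 h34
    have h := heig v hv
    unfold kagomeLap at h
    rw [tsum_four F v p1 p2 p3 p4 hP h12 h13 h14 h23 h24 h34] at h
    linarith
  have hA : ∀ a b : ℤ, a%2=0 → b%2=0 →
      F (pt (a+1) b) + F (pt (a-1) b) + F (pt a (b+1)) + F (pt a (b-1))
        = (4 - 4*μ) * F (pt a b) := by
    intro a b ha hb
    exact key (pt a b) _ _ _ _ (pt_mem_V (by rw [Int.odd_iff, Int.odd_iff]; omega))
      (adjA ha hb) (pt_ne (by omega)) (pt_ne (by omega)) (pt_ne (by omega))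
      (pt_ne (by omega)) (pt_ne (by omega)) (pt_ne (by omega))
  have hB : ∀ a b : ℤ, a%2=1 → b%2=0 →
      F (pt (a+1) b) + F (pt (a-1) b) + F (pt (a-1) (b+1)) + F (pt (a+1) (b-1))
        = (4 - 4*μ) * F (pt a b) := by
    intro a b ha hb
    exact key (pt a b) _ _ _ _ (pt_mem_V (by rw [Int.odd_iff, Int.odd_iff]; omega))
      (adjB ha hb) (pt_ne (by omega)) (pt_ne (by omega)) (pt_ne (by omega))
      (pt_ne (by omega)) (pt_ne (by omega)) (pt_ne (by omega))
  have hC : ∀ a b : ℤ, a%2=0 → b%2=1 →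
      F (pt a (b+1)) + F (pt a (b-1)) + F (pt (a-1) (b+1)) + F (pt (a+1) (b-1))
        = (4 - 4*μ) * F (pt a b) := by
    intro a b ha hb
    exact key (pt a b) _ _ _ _ (pt_mem_V (by rw [Int.odd_iff, Int.odd_iff]; omega))
      (adjC ha hb) (pt_ne (by omega)) (pt_ne (by omega)) (pt_ne (by omega))
      (pt_ne (by omega)) (pt_ne (by omega)) (pt_ne (by omega))
  have hodd : ∀ a b : ℤ, a%2=1 → b%2=1 → F (pt a b) = 0 := by
    intro a b ha hb
    apply hzero
    intro hmem
    exact (pt_mem_iff.1 hmem) ⟨Int.odd_iff.2 ha, Int.odd_iff.2 hb⟩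
  have hfinG : (Function.support fun p : ℤ×ℤ => F (pt p.1 p.2)).Finite := by
    have hsub : (Function.support fun p : ℤ×ℤ => F (pt p.1 p.2))
        ⊆ (fun p : ℤ×ℤ => pt p.1 p.2) ⁻¹' (Function.support F) := fun p hp => hp
    refine Set.Finite.subset (Set.Finite.preimage ?_ hfin) hsub
    intro p _ q _ h
    obtain ⟨h1, h2⟩ := pt_inj h
    exact Prod.ext h1 h2
  have hneG : ∃ a b : ℤ, F (pt a b) ≠ 0 := by
    obtain ⟨v, hv⟩ := Function.ne_iff.1 hne
    have hvV : v ∈ kagomeV := by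
      by_contra h
      exact hv (hzero v h)
    obtain ⟨a, b, rfl, -⟩ := (memV_iff v).1 hvV
    exact ⟨a, b, hv⟩
  obtain ⟨hlam, t, c, hc⟩ :=
    Gmain (fun a b => F (pt a b)) (4 - 4*μ) hfinG hodd hA hB hC hneG
  constructor
  · linarith
  refine ⟨t.image (fun p => pt (2*p.1+1) (2*p.2+1)),
    fun z => ∑ p ∈ t.filter (fun p => pt (2*p.1+1) (2*p.2+1) = z), c p, ?_, ?_⟩
  · intro w₀ hw₀
    obtain ⟨p, hp, rfl⟩ := Finset.mem_image.1 hw₀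
    exact center_isHexCenter p.1 p.2
  · intro v
    have hsum : ∑ w₀ ∈ t.image (fun p => pt (2*p.1+1) (2*p.2+1)),
        (∑ p ∈ t.filter (fun p => pt (2*p.1+1) (2*p.2+1) = w₀), c p) * hexFun w₀ v
        = ∑ p ∈ t, c p * hexFun (pt (2*p.1+1) (2*p.2+1)) v := by
      rw [Finset.sum_image (fun p hp q hq h => by
        obtain ⟨h1, h2⟩ := pt_inj h
        exact Prod.ext (by omega) (by omega))]
      apply Finset.sum_congr rfl
      intro p hp
      have hfilter : t.filter
          (fun q => pt (2*q.1+1) (2*q.2+1) = pt (2*p.1+1) (2*p.2+1)) = {p} := by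
        ext q
        simp only [Finset.mem_filter, Finset.mem_singleton]
        constructor
        · rintro ⟨hq, he⟩
          obtain ⟨h1, h2⟩ := pt_inj he
          exact Prod.ext (by omega) (by omega)
        · rintro rfl
          exact ⟨hp, rfl⟩
      rw [hfilter, Finset.sum_singleton]
    rw [hsum]
    by_cases hv : v ∈ kagomeV
    · obtain ⟨a, b, rfl, -⟩ := (memV_iff v).1 hv
      calc F (pt a b) = ∑ p ∈ t, c p * Hex p.1 p.2 a b := hc a b
        _ = ∑ p ∈ t, c p * hexFun (pt (2*p.1+1) (2*p.2+1)) (pt a b) := by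
            apply Finset.sum_congr rfl
            intro p _
            rw [hexFun_pt]
    · rw [hzero v hv]
      symm
      apply Finset.sum_eq_zero
      intro p _
      rw [hexFun_not_mem (center_isHexCenter p.1 p.2) hv, mul_zero]
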